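/- Let m₀, i : ℝ → ℝ → ℝ be continuous, m₁ : ℝ → ℝ → ℝ → ℝ be continuous, and S₀ : ℝ → ℝ. Define S(t,a) := S₀(t−a)·exp(−∫₀ᵃ (m₀(t−a+τ,τ) + i(t−a+τ,τ)) dτ), M₁(t,a,d) := ∫₀^d m₁(t−d+τ, a−d+τ, τ) dτ, and C(t,a,d) := i(t−d, a−d)·S(t−d, a−d)·exp(−M₁(t,a,d)). Then C(t,a,0) = i(t,a)·S(t,a) for all (t,a), and for every (t,a,d) with d ≥ 0 the function s ↦ C(t+s, a+s, d+s) has derivative −m₁(t,a,d)·C(t,a,d) at s = 0. (That is, C solves the Cauchy problem (∂ₜ+∂ₐ+∂_d)C = −m₁·C with initial condition C(t,a,0) = i(t,a)·S(t,a).) -/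

import Mathlib

/-- The number of cases
`C(t,a,d) = i(t−d,a−d)·S(t−d,a−d)·exp(−M₁(t,a,d))` solves the Cauchy problem
`(∂ₜ+∂ₐ+∂_d)C = −m₁·C` with initial condition `C(t,a,0) = i(t,a)·S(t,a)`. -/
theorem keiding_C_solves_cauchy_problem
    (m₀ i : ℝ → ℝ → ℝ)
    (hm₀ : Continuous fun q : ℝ × ℝ => m₀ q.1 q.2)
    (hi : Continuous fun q : ℝ × ℝ => i q.1 q.2)
    (m₁ : ℝ → ℝ → ℝ → ℝ)
    (hm₁ : Continuous fun q : ℝ × ℝ × ℝ => m₁ q.1 q.2.1 q.2.2)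
    (S₀ : ℝ → ℝ) (S : ℝ → ℝ → ℝ)
    (hS : ∀ t a : ℝ, S t a = S₀ (t - a) *
      Real.exp (-∫ τ in (0:ℝ)..a, (m₀ (t - a + τ) τ + i (t - a + τ) τ)))
    (M₁ : ℝ → ℝ → ℝ → ℝ)
    (hM₁ : ∀ t a d : ℝ, M₁ t a d =
      ∫ τ in (0:ℝ)..d, m₁ (t - d + τ) (a - d + τ) τ)
    (C : ℝ → ℝ → ℝ → ℝ)
    (hC : ∀ t a d : ℝ, C t a d =
      i (t - d) (a - d) * S (t - d) (a - d) * Real.exp (-M₁ t a d)) :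
    (∀ t a : ℝ, C t a 0 = i t a * S t a) ∧
    (∀ t a d : ℝ, 0 ≤ d →
      HasDerivAt (fun s : ℝ => C (t + s) (a + s) (d + s))
        (-m₁ t a d * C t a d) 0) := by
  constructor
  · intro t a
    rw [hC, hM₁]
    simp
  · intro t a d _
    set g : ℝ → ℝ := fun τ => m₁ (t - d + τ) (a - d + τ) τ with hg_def
    have hg : Continuous g := by
      have : Continuous fun τ : ℝ => ((t - d + τ, a - d + τ, τ) : ℝ × ℝ × ℝ) := by
        continuity
      exact hm₁.comp this
    set F : ℝ → ℝ := fun x => ∫ τ in (0:ℝ)..x, g τ with hF_def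
    have hF : HasDerivAt F (g d) d :=
      intervalIntegral.integral_hasDerivAt_right (hg.intervalIntegrable _ _)
        (hg.stronglyMeasurableAtFilter _ _) hg.continuousAt
    set K : ℝ := i (t - d) (a - d) * S (t - d) (a - d) with hK_def
    have key : (fun s : ℝ => C (t + s) (a + s) (d + s)) =
        fun s : ℝ => K * Real.exp (-F (d + s)) := by
      funext s
      rw [hC, hM₁]
      have h1 : t + s - (d + s) = t - d := by ring
      have h2 : a + s - (d + s) = a - d := by ring
      rw [h1, h2]
    rw [key]
    have hds : HasDerivAt (fun s : ℝ => d + s) 1 0 := by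
      simpa using (hasDerivAt_id (0:ℝ)).const_add d
    have hFs : HasDerivAt (fun s : ℝ => F (d + s)) (g d * 1) 0 := by
      have hF0 : HasDerivAt F (g d) (d + 0) := by simpa using hF
      exact hF0.comp 0 hds
    have hexp : HasDerivAt (fun s : ℝ => Real.exp (-F (d + s)))
        (Real.exp (-F (d + 0)) * -(g d * 1)) 0 := hFs.neg.exp
    have := hexp.const_mul K
    refine this.congr_deriv (Eq.symm ?_)
    rw [hC t a d, hM₁ t a d]
    simp only [hF_def, hK_def, hg_def, add_zero]
    ring_nf
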